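/- Let D be the 2^{2n} × (2n+2) design generated from G = (v, I_n) with k_1 = f_1 + 2f_2 + f_3 + 1, k_2 = 2f_1 + 2f_3 + 2, ρ = 2^{−⌊(f_1+f_3)/2⌋}. Then the generalized resolution of D equals k_2 if k_1 ≥ k_2, and equals k_1 + 1 − ρ otherwise. -/

import Mathlib

open Finset

/-- The Gray map `φ : Z₄ → {−1,1}²`: φ(0)=(1,1), φ(1)=(1,−1), φ(2)=(−1,−1), φ(3)=(−1,1). -/
def gray (x : ZMod 4) : Fin 2 → ℤ := fun c =>
  if c = 0 then (if x = 0 ∨ x = 1 then 1 else -1)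
  else (if x = 0 ∨ x = 3 then 1 else -1)

/-- The `2^{2n} × (2n+2)` two-level design which is the Gray-map image of the quaternary
code generated by `G = (v, Iₙ)`.  Rows are indexed by `u : Fin n → ZMod 4`; the codeword is
`(∑ uᵢvᵢ, u₁, …, uₙ)` and each `Z₄`-coordinate gives two ±1 columns via the Gray map. -/
def Dv {n : ℕ} (v : Fin n → ZMod 4) :
    (Fin n → ZMod 4) → (Fin (n + 1) × Fin 2) → ℤ :=
  fun u p => gray ((Fin.cons (∑ i, u i * v i) u : Fin (n + 1) → ZMod 4) p.1) p.2

/-- The J-characteristic `j(s; D) = ∑ᵢ ∏_{c ∈ s} D i c`. -/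
def Jchar {I J : Type*} [Fintype I] (D : I → J → ℤ) (s : Finset J) : ℤ :=
  ∑ i, ∏ c ∈ s, D i c

/-- The aliasing index `ρ(s; D) = |j(s; D)| / N`. -/
def rho {I J : Type*} [Fintype I] (D : I → J → ℤ) (s : Finset J) : ℚ :=
  |(Jchar D s : ℚ)| / (Fintype.card I : ℚ)

/-- `freq v z` = number of occurrences of `z ∈ Z₄` in the vector `v`. -/
def freq {n : ℕ} (v : Fin n → ZMod 4) (z : ZMod 4) : ℕ :=
  (Finset.univ.filter fun i => v i = z).card

/-- A design has projectivity (at least) `p` if every projection onto `p` columns contains a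
complete `2^p` factorial. -/
def hasProjectivity {I J : Type*} (D : I → J → ℤ) (p : ℕ) : Prop :=
  ∀ s : Finset J, s.card = p → ∀ ε : J → ℤ, (∀ c, ε c = 1 ∨ ε c = -1) →
    ∃ i, ∀ c ∈ s, D i c = ε c

/-- `hasResolution D R` : the generalized resolution of `D` equals `R`, i.e.
`R = r + 1 − max_{|s| = r} ρ(s; D)` where `r` is the smallest size of a (nonempty) column
subset with positive aliasing index. -/
def hasResolution {I J : Type*} [Fintype I] (D : I → J → ℤ) (R : ℚ) : Prop :=
  ∃ (r : ℕ) (m : ℚ),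
    (∃ s : Finset J, s.card = r ∧ 0 < rho D s) ∧
    (∀ s : Finset J, s.Nonempty → s.card < r → rho D s = 0) ∧
    (∃ s : Finset J, s.card = r ∧ rho D s = m) ∧
    (∀ s : Finset J, s.card = r → rho D s ≤ m) ∧
    R = (r : ℚ) + 1 - m

/-- The generalized wordlength pattern `A_k(D) = ∑_{|s| = k} ρ(s; D)²`. -/
def Apattern {I J : Type*} [Fintype I] [Fintype J] (D : I → J → ℤ) (k : ℕ) : ℚ :=
  ∑ s ∈ Finset.powersetCard k Finset.univ, (rho D s) ^ 2

/-- The half-fraction of `D` obtained by keeping the rows where the branching column `b`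
equals `+1` and deleting column `b`. -/
def halfFraction {I J : Type*} (D : I → J → ℤ) (b : J) :
    {i : I // D i b = 1} → {c : J // c ≠ b} → ℤ :=
  fun i c => D i.1 c.1

/-- Sequential (lexicographic) comparison of generalized wordlength patterns:
`D` has no more aberration than `D'`. -/
def wlpLe {I I' J : Type*} [Fintype I] [Fintype I'] [Fintype J]
    (D : I → J → ℤ) (D' : I' → J → ℤ) : Prop :=
  ∀ k : ℕ, (∀ j < k, Apattern D j = Apattern D' j) → Apattern D k ≤ Apattern D' k


abbrev Zi := GaussianInt
def Ei (k : ZMod 4) : Zi := (⟨0,1⟩ : Zi) ^ k.val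
def Gp (T : Finset (Fin 2)) (x : ZMod 4) : ℤ := ∏ c ∈ T, gray x c
def Sv (T : Finset (Fin 2)) (m : ZMod 4) : Zi := ∑ x : ZMod 4, (Gp T x : Zi) * Ei (m * x)
def c2 (T : Finset (Fin 2)) (k : ZMod 4) : Zi :=
  if T = ∅ then (if k = 0 then 2 else 0)
  else if T = {0} then (if k = 1 then ⟨1,-1⟩ else if k = 3 then ⟨1,1⟩ else 0)
  else if T = {1} then (if k = 1 then ⟨1,1⟩ else if k = 3 then ⟨1,-1⟩ else 0)
  else (if k = 2 then 2 else 0)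
theorem fourierG : ∀ (T : Finset (Fin 2)) (x : ZMod 4),
    ((2 * Gp T x : ℤ) : Zi) = ∑ k : ZMod 4, c2 T k * Ei (k * x) := by decide
theorem Ei_add : ∀ a b : ZMod 4, Ei (a + b) = Ei a * Ei b := by decide
theorem Ei_sum {ι : Type*} (t : Finset ι) (f : ι → ZMod 4) :
    Ei (∑ i ∈ t, f i) = ∏ i ∈ t, Ei (f i) := by
  induction t using Finset.cons_induction with
  | empty => simp [show Ei 0 = 1 from rfl]
  | cons a t ha ih => rw [Finset.sum_cons, Finset.prod_cons, Ei_add, ih]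

theorem Sv_zero : ∀ T, Sv T 0 = if T = ∅ then 4 else 0 := by decide
theorem Sv_two : ∀ T, Sv T 2 = if T = Finset.univ then 4 else 0 := by decide
theorem Sv_one : ∀ T, Sv T 1 = if T = {0} then ⟨2,2⟩ else if T = {1} then ⟨2,-2⟩ else 0 := by decide
theorem Sv_three : ∀ T, Sv T 3 = if T = {0} then ⟨2,-2⟩ else if T = {1} then ⟨2,2⟩ else 0 := by decide
theorem Sv_star : ∀ T m, Sv T (3 * m) = star (Sv T m) := by decide
theorem c2_star : ∀ T, c2 T 3 = star (c2 T 1) := by decide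

def tset {n : ℕ} (s : Finset (Fin (n+1) × Fin 2)) (j : Fin (n+1)) : Finset (Fin 2) :=
  univ.filter (fun c => (j, c) ∈ s)

theorem master {n : ℕ} (v : Fin n → ZMod 4) (s : Finset (Fin (n+1) × Fin 2)) :
    ((2 * Jchar (Dv v) s : ℤ) : Zi) =
    ∑ k : ZMod 4, c2 (tset s 0) k * ∏ i : Fin n, Sv (tset s i.succ) (k * v i) := by
  have key : ∀ u : Fin n → ZMod 4, ∏ p ∈ s, Dv v u p
      = Gp (tset s 0) (∑ i, u i * v i) * ∏ i : Fin n, Gp (tset s i.succ) (u i) := by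
    intro u
    have h1 : ∏ p ∈ s, Dv v u p = ∏ p : Fin (n+1) × Fin 2, if p ∈ s then Dv v u p else 1 := by
      rw [Finset.prod_ite_mem, Finset.univ_inter]
    rw [h1, Fintype.prod_prod_type]
    have h2 : ∀ j : Fin (n+1), (∏ c : Fin 2, if (j, c) ∈ s then Dv v u (j, c) else 1)
        = Gp (tset s j) ((Fin.cons (∑ i, u i * v i) u : Fin (n+1) → ZMod 4) j) := by
      intro j
      rw [Gp, tset, Finset.prod_filter]
      rfl
    rw [Finset.prod_congr rfl (fun j _ => h2 j), Fin.prod_univ_succ]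
    simp [Fin.cons_zero, Fin.cons_succ]
  have step1 : ((2 * Jchar (Dv v) s : ℤ) : Zi)
      = ∑ u : Fin n → ZMod 4, ((2 * Gp (tset s 0) (∑ i, u i * v i) : ℤ) : Zi)
          * ∏ i : Fin n, ((Gp (tset s i.succ) (u i) : ℤ) : Zi) := by
    rw [Jchar]
    simp only [key]
    push_cast [Finset.mul_sum]
    exact Finset.sum_congr rfl fun u _ => by ring
  rw [step1]
  have step2 : ∀ u : Fin n → ZMod 4,
      ((2 * Gp (tset s 0) (∑ i, u i * v i) : ℤ) : Zi)
          * ∏ i : Fin n, ((Gp (tset s i.succ) (u i) : ℤ) : Zi)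
      = ∑ k : ZMod 4, c2 (tset s 0) k *
          ∏ i : Fin n, (Ei ((k * v i) * u i) * ((Gp (tset s i.succ) (u i) : ℤ) : Zi)) := by
    intro u
    rw [fourierG, Finset.sum_mul]
    refine Finset.sum_congr rfl fun k _ => ?_
    rw [Finset.mul_sum, Ei_sum, Finset.prod_mul_distrib, mul_assoc]
    congr 1
    congr 1
    refine Finset.prod_congr rfl fun i _ => ?_
    congr 1
    ring
  rw [Finset.sum_congr rfl (fun u _ => step2 u), Finset.sum_comm]
  refine Finset.sum_congr rfl fun k _ => ?_
  rw [← Finset.mul_sum]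
  congr 1
  have := Finset.prod_univ_sum (fun _ : Fin n => (univ : Finset (ZMod 4)))
    (fun i x => Ei ((k * v i) * x) * ((Gp (tset s i.succ) x : ℤ) : Zi))
  rw [Fintype.piFinset_univ] at this
  rw [← this]
  refine Finset.prod_congr rfl fun i _ => ?_
  rw [Sv]
  exact Finset.sum_congr rfl fun x _ => mul_comm _ _

theorem sumZ4 {M : Type*} [AddCommMonoid M] (f : ZMod 4 → M) :
    ∑ k : ZMod 4, f k = f 0 + f 1 + f 2 + f 3 := by
  have h : (univ : Finset (ZMod 4)) = {0, 1, 2, 3} := by decide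
  rw [h, Finset.sum_insert (by decide), Finset.sum_insert (by decide),
    Finset.sum_insert (by decide), Finset.sum_singleton]
  simp [add_assoc]

theorem mem_tset {n : ℕ} (s : Finset (Fin (n+1) × Fin 2)) (j : Fin (n+1)) (c : Fin 2) :
    c ∈ tset s j ↔ (j, c) ∈ s := by simp [tset]

theorem card_tset {n : ℕ} (s : Finset (Fin (n+1) × Fin 2)) :
    s.card = ∑ j : Fin (n+1), (tset s j).card := by
  rw [Finset.card_eq_sum_card_fiberwise (f := Prod.fst) (t := univ) (fun x _ => mem_univ _)]
  refine Finset.sum_congr rfl fun j _ => ?_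
  refine Finset.card_bij' (fun q _ => q.2) (fun c _ => (j, c)) ?_ ?_ ?_ ?_
  · rintro ⟨a, c⟩ hq
    simp only [mem_filter] at hq
    obtain ⟨hm, he⟩ := hq
    subst he
    simpa [mem_tset] using hm
  · intro c hc
    rw [mem_tset] at hc
    simp [hc]
  · rintro ⟨a, c⟩ hq
    simp only [mem_filter] at hq
    obtain ⟨hm, he⟩ := hq
    subst he
    rfl
  · intro c _
    rfl

theorem sum_g {n : ℕ} (v : Fin n → ZMod 4) (g : ZMod 4 → ℕ) :
    ∑ i : Fin n, g (v i) = ∑ z : ZMod 4, freq v z * g z := by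
  rw [← Finset.sum_fiberwise univ v (fun i => g (v i))]
  refine Finset.sum_congr rfl fun z _ => ?_
  rw [freq]
  rw [Finset.sum_congr rfl (fun i hi => by rw [(Finset.mem_filter.1 hi).2])]
  rw [Finset.sum_const, smul_eq_mul]

theorem freq_sum {n : ℕ} (v : Fin n → ZMod 4) :
    ∑ z : ZMod 4, freq v z = n := by
  have := sum_g v (fun _ => 1)
  simp only [mul_one] at this
  rw [← this]
  simp

theorem z4cases : ∀ z : ZMod 4, z = 0 ∨ z = 1 ∨ z = 2 ∨ z = 3 := by decide
theorem t2cases : ∀ T : Finset (Fin 2), T = ∅ ∨ T = {0} ∨ T = {1} ∨ T = Finset.univ := by decide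
theorem fin2cases : ∀ c : Fin 2, c = 0 ∨ c = 1 := by decide

section Main
variable {n : ℕ} (v : Fin n → ZMod 4)

/-- the unique word of size k2 with rho = 1 -/
def sB1 : Finset (Fin (n+1) × Fin 2) :=
  univ.filter (fun q => q.1 = 0 ∨ ∃ i : Fin n, q.1 = i.succ ∧ (v i = 1 ∨ v i = 3))

/-- candidate words of size k1, parametrized by a choice of column for odd coordinates -/
def sC (ch : Fin n → Fin 2) : Finset (Fin (n+1) × Fin 2) :=
  univ.filter (fun q => (q.1 = 0 ∧ q.2 = 0) ∨
    ∃ i : Fin n, q.1 = i.succ ∧ (v i = 2 ∨ ((v i = 1 ∨ v i = 3) ∧ q.2 = ch i)))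

/-- admissibility for words containing exactly one column of coordinate 0 -/
def B2adm (s : Finset (Fin (n+1) × Fin 2)) : Prop :=
  (tset s 0 = {0} ∨ tset s 0 = {1}) ∧
  ∀ i : Fin n, (v i = 0 → tset s i.succ = ∅) ∧ (v i = 2 → tset s i.succ = Finset.univ) ∧
    ((v i = 1 ∨ v i = 3) → tset s i.succ = {0} ∨ tset s i.succ = {1})

theorem tset_sB1_zero : tset (sB1 v) 0 = Finset.univ := by
  ext c
  simp [mem_tset, sB1]

theorem tset_sB1_succ (i : Fin n) :
    tset (sB1 v) i.succ = if v i = 1 ∨ v i = 3 then Finset.univ else ∅ := by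
  ext c
  rw [mem_tset]
  simp only [sB1, mem_filter, mem_univ, true_and]
  constructor
  · rintro (h | ⟨i', hi', hv⟩)
    · exact absurd h (Fin.succ_ne_zero i)
    · rw [Fin.succ_inj] at hi'
      subst hi'
      simp [hv]
  · intro hc
    by_cases hv : v i = 1 ∨ v i = 3
    · exact Or.inr ⟨i, rfl, hv⟩
    · simp [hv] at hc

theorem tset_sC_zero (ch : Fin n → Fin 2) : tset (sC v ch) 0 = {0} := by
  ext c
  rw [mem_tset]
  simp only [sC, mem_filter, mem_univ, true_and]
  constructor
  · rintro (h | ⟨i', hi', hv⟩)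
    · simp [h]
    · exact absurd hi'.symm (Fin.succ_ne_zero i')
  · intro hc
    simp only [Finset.mem_singleton] at hc
    exact Or.inl hc

theorem tset_sC_succ (ch : Fin n → Fin 2) (i : Fin n) :
    tset (sC v ch) i.succ =
      if v i = 2 then Finset.univ else if v i = 1 ∨ v i = 3 then {ch i} else ∅ := by
  ext c
  rw [mem_tset]
  simp only [sC, mem_filter, mem_univ, true_and]
  constructor
  · rintro (⟨h, h'⟩ | ⟨i', hi', hv⟩)
    · exact absurd h (Fin.succ_ne_zero i)
    · rw [Fin.succ_inj] at hi'
      subst hi'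
      rcases hv with h2 | ⟨hodd, hch⟩
      · rw [h2, if_pos rfl]
        exact Finset.mem_univ c
      · rcases hodd with h1 | h3
        · rw [h1, if_neg (by decide), if_pos (by decide), Finset.mem_singleton]
          exact hch
        · rw [h3, if_neg (by decide), if_pos (by decide), Finset.mem_singleton]
          exact hch
  · intro hc
    rcases z4cases (v i) with h | h | h | h <;> rw [h] at hc
    · rw [if_neg (by decide), if_neg (by decide)] at hc
      exact absurd hc (Finset.notMem_empty c)
    · rw [if_neg (by decide), if_pos (by decide), Finset.mem_singleton] at hc
      exact Or.inr ⟨i, rfl, Or.inr ⟨Or.inl h, hc⟩⟩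
    · exact Or.inr ⟨i, rfl, Or.inl h⟩
    · rw [if_neg (by decide), if_pos (by decide), Finset.mem_singleton] at hc
      exact Or.inr ⟨i, rfl, Or.inr ⟨Or.inr h, hc⟩⟩

theorem tset_ext {s s' : Finset (Fin (n+1) × Fin 2)}
    (h : ∀ j, tset s j = tset s' j) : s = s' := by
  ext q
  obtain ⟨j, c⟩ := q
  rw [← mem_tset, ← mem_tset, h j]

theorem B2adm_sC (ch : Fin n → Fin 2) : B2adm v (sC v ch) := by
  refine ⟨Or.inl (tset_sC_zero v ch), fun i => ?_⟩
  rw [tset_sC_succ]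
  refine ⟨fun h0 => ?_, fun h2 => ?_, fun hodd => ?_⟩
  · rw [h0, if_neg (by decide), if_neg (by decide)]
  · rw [h2, if_pos rfl]
  · rcases hodd with h | h
    · rw [h, if_neg (by decide), if_pos (by decide)]
      rcases fin2cases (ch i) with hc | hc <;> rw [hc]
      · exact Or.inl rfl
      · exact Or.inr rfl
    · rw [h, if_neg (by decide), if_pos (by decide)]
      rcases fin2cases (ch i) with hc | hc <;> rw [hc]
      · exact Or.inl rfl
      · exact Or.inr rfl

theorem B2adm_card {s : Finset (Fin (n+1) × Fin 2)} (h : B2adm v s) :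
    s.card = freq v 1 + 2 * freq v 2 + freq v 3 + 1 := by
  rw [card_tset, Fin.sum_univ_succ]
  have h0 : (tset s 0).card = 1 := by
    rcases h.1 with h' | h' <;> rw [h'] <;> rfl
  have hi : ∀ i : Fin n, (tset s i.succ).card
      = (if v i = 2 then 2 else if v i = 0 then 0 else 1) := by
    intro i
    obtain ⟨c0, c2', codd⟩ := h.2 i
    rcases z4cases (v i) with hv | hv | hv | hv <;> rw [hv]
    · rw [c0 hv]
      decide
    · rcases codd (Or.inl hv) with h' | h' <;> rw [h'] <;> decide
    · rw [c2' hv]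
      decide
    · rcases codd (Or.inr hv) with h' | h' <;> rw [h'] <;> decide
  have hsum := sum_g v (fun z : ZMod 4 => if z = 2 then 2 else if z = 0 then 0 else 1)
  rw [h0, Finset.sum_congr rfl (fun i _ => hi i), hsum, sumZ4]
  have e0 : (if (0:ZMod 4) = 2 then 2 else if (0:ZMod 4) = 0 then 0 else 1) = 0 := by decide
  have e1 : (if (1:ZMod 4) = 2 then 2 else if (1:ZMod 4) = 0 then 0 else 1) = 1 := by decide
  have e2 : (if (2:ZMod 4) = 2 then 2 else if (2:ZMod 4) = 0 then 0 else 1) = 2 := by decide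
  have e3 : (if (3:ZMod 4) = 2 then 2 else if (3:ZMod 4) = 0 then 0 else 1) = 1 := by decide
  rw [e0, e1, e2, e3]
  ring

theorem sB1_card : (sB1 v).card = 2 * freq v 1 + 2 * freq v 3 + 2 := by
  rw [card_tset, Fin.sum_univ_succ, tset_sB1_zero]
  have hi : ∀ i : Fin n, (tset (sB1 v) i.succ).card
      = (if v i = 1 ∨ v i = 3 then 2 else 0) := by
    intro i
    rw [tset_sB1_succ]
    by_cases hv : v i = 1 ∨ v i = 3
    · rw [if_pos hv, if_pos hv]
      rfl
    · rw [if_neg hv, if_neg hv]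
      rfl
  have hsum := sum_g v (fun z : ZMod 4 => if z = 1 ∨ z = 3 then 2 else 0)
  rw [Finset.sum_congr rfl (fun i _ => hi i), hsum, sumZ4]
  have e0 : (if (0:ZMod 4) = 1 ∨ (0:ZMod 4) = 3 then 2 else 0) = 0 := by decide
  have e1 : (if (1:ZMod 4) = 1 ∨ (1:ZMod 4) = 3 then 2 else 0) = 2 := by decide
  have e2 : (if (2:ZMod 4) = 1 ∨ (2:ZMod 4) = 3 then 2 else 0) = 0 := by decide
  have e3 : (if (3:ZMod 4) = 1 ∨ (3:ZMod 4) = 3 then 2 else 0) = 2 := by decide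
  rw [e0, e1, e2, e3]
  have hu : (Finset.univ : Finset (Fin 2)).card = 2 := rfl
  rw [hu]
  ring

theorem key_vanish {s : Finset (Fin (n+1) × Fin 2)} (hne : s.Nonempty)
    (hB1 : s ≠ sB1 v) (hB2 : ¬ B2adm v s) : Jchar (Dv v) s = 0 := by
  have hm := master v s
  suffices h2J : ((2 * Jchar (Dv v) s : ℤ) : Zi) = 0 by
    have h2 : (2 * Jchar (Dv v) s : ℤ) = 0 := by exact_mod_cast h2J
    omega
  rw [hm]
  rcases t2cases (tset s 0) with hT | hT | hT | hT
  · -- T0 = ∅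
    obtain ⟨⟨j, c⟩, hq⟩ := hne
    rcases Fin.eq_zero_or_eq_succ j with rfl | ⟨i0, rfl⟩
    · exact absurd ((mem_tset s 0 c).2 hq) (by rw [hT]; exact Finset.notMem_empty c)
    · have hne0 : tset s i0.succ ≠ ∅ := by
        intro he
        exact absurd ((mem_tset s i0.succ c).2 hq) (by rw [he]; exact Finset.notMem_empty c)
      refine Finset.sum_eq_zero fun k _ => ?_
      rcases z4cases k with hk | hk | hk | hk <;> subst hk
      · have hfac : Sv (tset s i0.succ) (0 * v i0) = 0 := by
          rw [zero_mul, Sv_zero, if_neg hne0]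
        rw [Finset.prod_eq_zero (Finset.mem_univ i0) hfac, mul_zero]
      · rw [hT, show c2 ∅ 1 = 0 from by decide, zero_mul]
      · rw [hT, show c2 ∅ 2 = 0 from by decide, zero_mul]
      · rw [hT, show c2 ∅ 3 = 0 from by decide, zero_mul]
  · -- T0 = {0}
    have hfail : ∃ i0 : Fin n, ¬ ((v i0 = 0 → tset s i0.succ = ∅) ∧
        (v i0 = 2 → tset s i0.succ = Finset.univ) ∧
        ((v i0 = 1 ∨ v i0 = 3) → tset s i0.succ = {0} ∨ tset s i0.succ = {1})) := by
      by_contra hall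
      push_neg at hall
      exact hB2 ⟨Or.inl hT, fun i => hall i⟩
    obtain ⟨i0, hC⟩ := hfail
    have hz : Sv (tset s i0.succ) (1 * v i0) = 0 ∧ Sv (tset s i0.succ) (3 * v i0) = 0 := by
      rcases z4cases (v i0) with hv | hv | hv | hv
      · have hTne : tset s i0.succ ≠ ∅ := by
          intro he
          exact hC ⟨fun _ => he, fun h2 => absurd (hv ▸ h2) (by decide),
            fun ho => absurd (hv ▸ ho) (by decide)⟩
        have e1 : (1:ZMod 4) * v i0 = 0 := by rw [hv]; decide
        have e3 : (3:ZMod 4) * v i0 = 0 := by rw [hv]; decide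
        rw [e1, e3, Sv_zero, if_neg hTne]
        exact ⟨rfl, rfl⟩
      · have hTne : tset s i0.succ ≠ {0} ∧ tset s i0.succ ≠ {1} := by
          constructor <;> intro he <;>
            exact hC ⟨fun h0 => absurd (hv ▸ h0) (by decide),
              fun h2 => absurd (hv ▸ h2) (by decide), fun _ => by rw [he]; simp⟩
        have e1 : (1:ZMod 4) * v i0 = 1 := by rw [hv]; decide
        have e3 : (3:ZMod 4) * v i0 = 3 := by rw [hv]; decide
        rw [e1, e3, Sv_one, Sv_three, if_neg hTne.1, if_neg hTne.2, if_neg hTne.1, if_neg hTne.2]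
        exact ⟨rfl, rfl⟩
      · have hTne : tset s i0.succ ≠ Finset.univ := by
          intro he
          exact hC ⟨fun h0 => absurd (hv ▸ h0) (by decide), fun _ => he,
            fun ho => absurd (hv ▸ ho) (by decide)⟩
        have e1 : (1:ZMod 4) * v i0 = 2 := by rw [hv]; decide
        have e3 : (3:ZMod 4) * v i0 = 2 := by rw [hv]; decide
        rw [e1, e3, Sv_two, if_neg hTne]
        exact ⟨rfl, rfl⟩
      · have hTne : tset s i0.succ ≠ {0} ∧ tset s i0.succ ≠ {1} := by
          constructor <;> intro he <;>
            exact hC ⟨fun h0 => absurd (hv ▸ h0) (by decide),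
              fun h2 => absurd (hv ▸ h2) (by decide), fun _ => by rw [he]; simp⟩
        have e1 : (1:ZMod 4) * v i0 = 3 := by rw [hv]; decide
        have e3 : (3:ZMod 4) * v i0 = 1 := by rw [hv]; decide
        rw [e1, e3, Sv_one, Sv_three, if_neg hTne.1, if_neg hTne.2, if_neg hTne.1, if_neg hTne.2]
        exact ⟨rfl, rfl⟩
    refine Finset.sum_eq_zero fun k _ => ?_
    rcases z4cases k with hk | hk | hk | hk <;> subst hk
    · rw [hT, show c2 {0} 0 = 0 from by decide, zero_mul]
    · rw [Finset.prod_eq_zero (Finset.mem_univ i0) hz.1, mul_zero]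
    · rw [hT, show c2 {0} 2 = 0 from by decide, zero_mul]
    · rw [Finset.prod_eq_zero (Finset.mem_univ i0) hz.2, mul_zero]
  · -- T0 = {1}
    have hfail : ∃ i0 : Fin n, ¬ ((v i0 = 0 → tset s i0.succ = ∅) ∧
        (v i0 = 2 → tset s i0.succ = Finset.univ) ∧
        ((v i0 = 1 ∨ v i0 = 3) → tset s i0.succ = {0} ∨ tset s i0.succ = {1})) := by
      by_contra hall
      push_neg at hall
      exact hB2 ⟨Or.inr hT, fun i => hall i⟩
    obtain ⟨i0, hC⟩ := hfail
    have hz : Sv (tset s i0.succ) (1 * v i0) = 0 ∧ Sv (tset s i0.succ) (3 * v i0) = 0 := by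
      rcases z4cases (v i0) with hv | hv | hv | hv
      · have hTne : tset s i0.succ ≠ ∅ := by
          intro he
          exact hC ⟨fun _ => he, fun h2 => absurd (hv ▸ h2) (by decide),
            fun ho => absurd (hv ▸ ho) (by decide)⟩
        have e1 : (1:ZMod 4) * v i0 = 0 := by rw [hv]; decide
        have e3 : (3:ZMod 4) * v i0 = 0 := by rw [hv]; decide
        rw [e1, e3, Sv_zero, if_neg hTne]
        exact ⟨rfl, rfl⟩
      · have hTne : tset s i0.succ ≠ {0} ∧ tset s i0.succ ≠ {1} := by
          constructor <;> intro he <;>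
            exact hC ⟨fun h0 => absurd (hv ▸ h0) (by decide),
              fun h2 => absurd (hv ▸ h2) (by decide), fun _ => by rw [he]; simp⟩
        have e1 : (1:ZMod 4) * v i0 = 1 := by rw [hv]; decide
        have e3 : (3:ZMod 4) * v i0 = 3 := by rw [hv]; decide
        rw [e1, e3, Sv_one, Sv_three, if_neg hTne.1, if_neg hTne.2, if_neg hTne.1, if_neg hTne.2]
        exact ⟨rfl, rfl⟩
      · have hTne : tset s i0.succ ≠ Finset.univ := by
          intro he
          exact hC ⟨fun h0 => absurd (hv ▸ h0) (by decide), fun _ => he,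
            fun ho => absurd (hv ▸ ho) (by decide)⟩
        have e1 : (1:ZMod 4) * v i0 = 2 := by rw [hv]; decide
        have e3 : (3:ZMod 4) * v i0 = 2 := by rw [hv]; decide
        rw [e1, e3, Sv_two, if_neg hTne]
        exact ⟨rfl, rfl⟩
      · have hTne : tset s i0.succ ≠ {0} ∧ tset s i0.succ ≠ {1} := by
          constructor <;> intro he <;>
            exact hC ⟨fun h0 => absurd (hv ▸ h0) (by decide),
              fun h2 => absurd (hv ▸ h2) (by decide), fun _ => by rw [he]; simp⟩
        have e1 : (1:ZMod 4) * v i0 = 3 := by rw [hv]; decide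
        have e3 : (3:ZMod 4) * v i0 = 1 := by rw [hv]; decide
        rw [e1, e3, Sv_one, Sv_three, if_neg hTne.1, if_neg hTne.2, if_neg hTne.1, if_neg hTne.2]
        exact ⟨rfl, rfl⟩
    refine Finset.sum_eq_zero fun k _ => ?_
    rcases z4cases k with hk | hk | hk | hk <;> subst hk
    · rw [hT, show c2 {1} 0 = 0 from by decide, zero_mul]
    · rw [Finset.prod_eq_zero (Finset.mem_univ i0) hz.1, mul_zero]
    · rw [hT, show c2 {1} 2 = 0 from by decide, zero_mul]
    · rw [Finset.prod_eq_zero (Finset.mem_univ i0) hz.2, mul_zero]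
  · -- T0 = univ
    have hfail : ∃ i0 : Fin n,
        tset s i0.succ ≠ (if v i0 = 1 ∨ v i0 = 3 then Finset.univ else ∅) := by
      by_contra hall
      push_neg at hall
      refine hB1 (tset_ext ?_)
      intro j
      rcases Fin.eq_zero_or_eq_succ j with rfl | ⟨i, rfl⟩
      · rw [hT, tset_sB1_zero]
      · rw [hall i, tset_sB1_succ]
    obtain ⟨i0, hC⟩ := hfail
    have hz : Sv (tset s i0.succ) (2 * v i0) = 0 := by
      rcases z4cases (v i0) with hv | hv | hv | hv
      · rw [hv, if_neg (by decide)] at hC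
        have e2 : (2:ZMod 4) * v i0 = 0 := by rw [hv]; decide
        rw [e2, Sv_zero, if_neg hC]
      · rw [hv, if_pos (by decide)] at hC
        have e2 : (2:ZMod 4) * v i0 = 2 := by rw [hv]; decide
        rw [e2, Sv_two, if_neg hC]
      · rw [hv, if_neg (by decide)] at hC
        have e2 : (2:ZMod 4) * v i0 = 0 := by rw [hv]; decide
        rw [e2, Sv_zero, if_neg hC]
      · rw [hv, if_pos (by decide)] at hC
        have e2 : (2:ZMod 4) * v i0 = 2 := by rw [hv]; decide
        rw [e2, Sv_two, if_neg hC]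
    refine Finset.sum_eq_zero fun k _ => ?_
    rcases z4cases k with hk | hk | hk | hk <;> subst hk
    · rw [hT, show c2 Finset.univ 0 = 0 from by decide, zero_mul]
    · rw [hT, show c2 Finset.univ 1 = 0 from by decide, zero_mul]
    · rw [Finset.prod_eq_zero (Finset.mem_univ i0) hz, mul_zero]
    · rw [hT, show c2 Finset.univ 3 = 0 from by decide, zero_mul]

/-- the Gaussian integer whose real part is (half) the J-characteristic in case B2 -/
def wOf (s : Finset (Fin (n+1) × Fin 2)) : Zi :=
  c2 (tset s 0) 1 * ∏ i : Fin n, Sv (tset s i.succ) (v i)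

theorem J_B2_re {s : Finset (Fin (n+1) × Fin 2)} (h : B2adm v s) :
    Jchar (Dv v) s = (wOf v s).re := by
  have hm := master v s
  have h2 : ((2 * Jchar (Dv v) s : ℤ) : Zi) = wOf v s + star (wOf v s) := by
    rw [hm, sumZ4]
    have hc0 : c2 (tset s 0) 0 = 0 := by
      rcases h.1 with h' | h' <;> rw [h'] <;> decide
    have hc2 : c2 (tset s 0) 2 = 0 := by
      rcases h.1 with h' | h' <;> rw [h'] <;> decide
    rw [hc0, hc2, zero_mul, zero_mul, zero_add, add_zero]
    have e1 : ∀ i : Fin n, (1 : ZMod 4) * v i = v i := fun i => one_mul _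
    have h3 : (∏ i : Fin n, Sv (tset s i.succ) (3 * v i))
        = star (∏ i : Fin n, Sv (tset s i.succ) (v i)) := by
      rw [star_prod]
      exact Finset.prod_congr rfl fun i _ => Sv_star _ _
    rw [Finset.prod_congr rfl (fun i _ => by rw [e1 i]), h3, c2_star, wOf, ← star_mul']
  have := congrArg Zsqrtd.re h2
  rw [Zsqrtd.re_intCast, Zsqrtd.re_add, Zsqrtd.re_star] at this
  omega

theorem pack_helper (a b m : ℕ) :
    ((⟨2,2⟩ : Zi) ^ a * (⟨2,-2⟩ : Zi) ^ b) * (4 : Zi) ^ m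
      = ((4 ^ m * 2 ^ (a + b) : ℤ) : Zi) * ((⟨1,1⟩ : Zi) ^ a * (⟨1,-1⟩ : Zi) ^ b) := by
  rw [show ((⟨2,2⟩:Zi)) = ((2:ℤ):Zi) * ⟨1,1⟩ from by decide,
    show ((⟨2,-2⟩:Zi)) = ((2:ℤ):Zi) * ⟨1,-1⟩ from by decide,
    show ((4:Zi)) = (((4:ℤ)):Zi) from by decide, mul_pow, mul_pow]
  push_cast
  ring

theorem wOf_decomp {s : Finset (Fin (n+1) × Fin 2)} (h : B2adm v s) :
    ∃ a b : ℕ, a + b = (freq v 1 + freq v 3) + 1 ∧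
      wOf v s = ((4 ^ (n - (freq v 1 + freq v 3)) * 2 ^ (freq v 1 + freq v 3) : ℤ) : Zi) *
        ((⟨1,1⟩ : Zi) ^ a * (⟨1,-1⟩ : Zi) ^ b) := by
  set F := freq v 1 + freq v 3 with hF
  have hfac : ∀ i : Fin n, Sv (tset s i.succ) (v i) =
      if v i = 1 ∨ v i = 3 then
        (if (v i = 1 ∧ tset s i.succ = {0}) ∨ (v i = 3 ∧ tset s i.succ = {1})
          then (⟨2,2⟩ : Zi) else ⟨2,-2⟩)
      else 4 := by
    intro i
    obtain ⟨c0, c2', codd⟩ := h.2 i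
    rcases z4cases (v i) with hv | hv | hv | hv
    · rw [c0 hv, hv]
      decide
    · rcases codd (Or.inl hv) with h' | h' <;> rw [h', hv] <;> decide
    · rw [c2' hv, hv]
      decide
    · rcases codd (Or.inr hv) with h' | h' <;> rw [h', hv] <;> decide
  have hodd_card : (univ.filter (fun i : Fin n => v i = 1 ∨ v i = 3)).card = F := by
    rw [Finset.filter_or, Finset.card_union_of_disjoint]
    · rfl
    · rw [Finset.disjoint_filter]
      intro i _ h1 h3
      rw [h1] at h3
      exact absurd h3 (by decide)
  have hP : (∏ i : Fin n, Sv (tset s i.succ) (v i))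
      = ((⟨2,2⟩ : Zi) ^ (((univ.filter (fun i : Fin n => v i = 1 ∨ v i = 3)).filter
            (fun i => (v i = 1 ∧ tset s i.succ = {0}) ∨ (v i = 3 ∧ tset s i.succ = {1}))).card)
          * (⟨2,-2⟩ : Zi) ^ (((univ.filter (fun i : Fin n => v i = 1 ∨ v i = 3)).filter
            (fun i => ¬((v i = 1 ∧ tset s i.succ = {0}) ∨ (v i = 3 ∧ tset s i.succ = {1})))).card))
        * (4 : Zi) ^ ((univ.filter (fun i : Fin n => ¬(v i = 1 ∨ v i = 3))).card) := by
    rw [Finset.prod_congr rfl (fun i _ => hfac i), Finset.prod_ite, Finset.prod_ite,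
      Finset.prod_const, Finset.prod_const, Finset.prod_const]
  set A := ((univ.filter (fun i : Fin n => v i = 1 ∨ v i = 3)).filter
      (fun i => (v i = 1 ∧ tset s i.succ = {0}) ∨ (v i = 3 ∧ tset s i.succ = {1}))).card with hA
  set B := ((univ.filter (fun i : Fin n => v i = 1 ∨ v i = 3)).filter
      (fun i => ¬((v i = 1 ∧ tset s i.succ = {0}) ∨ (v i = 3 ∧ tset s i.succ = {1})))).card with hB
  set C := (univ.filter (fun i : Fin n => ¬(v i = 1 ∨ v i = 3))).card with hC
  have h1 : A + B = F := by
    rw [hA, hB, ← hodd_card]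
    exact Finset.card_filter_add_card_filter_not _
  have h2 : F + C = n := by
    rw [← hodd_card, hC]
    have := Finset.card_filter_add_card_filter_not
      (s := (univ : Finset (Fin n))) (p := fun i : Fin n => v i = 1 ∨ v i = 3)
    simpa using this
  have hCF : C = n - F := by omega
  have hFn : F ≤ n := by omega
  rcases h.1 with hT | hT
  · refine ⟨A, B + 1, by omega, ?_⟩
    rw [wOf, hT, hP, pack_helper, show c2 {0} 1 = (⟨1,-1⟩ : Zi) from by decide,
      hCF, h1, pow_succ]
    ring
  · refine ⟨A + 1, B, by omega, ?_⟩
    rw [wOf, hT, hP, pack_helper, show c2 {1} 1 = (⟨1,1⟩ : Zi) from by decide,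
      hCF, h1, pow_succ]
    ring

theorem Ei_pow (t : ZMod 4) (m : ℕ) : (Ei t) ^ m = Ei ((m : ZMod 4) * t) := by
  induction m with
  | zero => simp [show Ei 0 = 1 from by decide]
  | succ m ih =>
    rw [pow_succ, ih, ← Ei_add]
    congr 1
    push_cast
    ring

theorem pow11 (M : ℕ) : ((⟨1,1⟩ : Zi)) ^ M
    = ((2 ^ (M / 2) : ℤ) : Zi) * (Ei ((M / 2 : ℕ) : ZMod 4) *
        (if M % 2 = 1 then (⟨1,1⟩ : Zi) else 1)) := by
  induction M with
  | zero => simp [show Ei 0 = 1 from by decide]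
  | succ M ih =>
    rcases Nat.even_or_odd M with hM | hM
    · have h0 : M % 2 = 0 := Nat.even_iff.1 hM
      have h1 : (M + 1) % 2 = 1 := by omega
      have h2 : (M + 1) / 2 = M / 2 := by omega
      rw [pow_succ, ih, h0, h1, h2, if_neg (by norm_num), if_pos rfl]
      ring
    · have h0 : M % 2 = 1 := Nat.odd_iff.1 hM
      have h1 : (M + 1) % 2 = 0 := by omega
      have h2 : (M + 1) / 2 = M / 2 + 1 := by omega
      rw [pow_succ, ih, h0, h1, h2, if_pos rfl, if_neg (by norm_num)]
      have sq : ((⟨1,1⟩ : Zi)) * (⟨1,1⟩ : Zi) = ((2:ℤ):Zi) * Ei 1 := by decide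
      have hc : (((M / 2 + 1 : ℕ)) : ZMod 4) = ((M / 2 : ℕ) : ZMod 4) + 1 := by push_cast; ring
      rw [hc, Ei_add, pow_succ, mul_one]
      push_cast at sq ⊢
      linear_combination (((2:Zi)) ^ (M / 2) * Ei ((M / 2 : ℕ) : ZMod 4)) * sq
  
/-- unit decomposition of `(1+i)^a (1-i)^b` -/
theorem unit_decomp (a b : ℕ) : ∃ t : ZMod 4,
    (⟨1,1⟩ : Zi) ^ a * (⟨1,-1⟩ : Zi) ^ b
      = ((2 ^ ((a + b) / 2) : ℤ) : Zi) *
        (Ei t * (if (a + b) % 2 = 1 then (⟨1,1⟩ : Zi) else 1)) := by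
  have hm : ((⟨1,-1⟩ : Zi)) = Ei 3 * ⟨1,1⟩ := by decide
  refine ⟨(b : ZMod 4) * 3 + (((a + b) / 2 : ℕ) : ZMod 4), ?_⟩
  rw [hm, mul_pow, Ei_pow, ← mul_assoc, mul_comm ((⟨1,1⟩:Zi) ^ a), mul_assoc, ← pow_add,
    pow11, Ei_add]
  ring

theorem re_unit_even : ∀ t : ZMod 4,
    (Ei t * (⟨1,1⟩ : Zi)).re = 1 ∨ (Ei t * (⟨1,1⟩ : Zi)).re = -1 := by decide
theorem re_unit_odd : ∀ t : ZMod 4,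
    (Ei t).re = 0 ∨ (Ei t).re = 1 ∨ (Ei t).re = -1 := by decide
theorem re_pair : ∀ t u : ZMod 4, (u = 1 ∨ u = 3) →
    (Ei t).re ^ 2 + (Ei (u + t)).re ^ 2 = 1 := by decide
theorem intmul_re (c : ℤ) (z : Zi) : (((c : ℤ) : Zi) * z).re = c * z.re := by
  rw [Zsqrtd.re_mul, Zsqrtd.re_intCast, Zsqrtd.im_intCast]
  ring

theorem J_sB1 : Jchar (Dv v) (sB1 v) = 4 ^ n := by
  have hm := master v (sB1 v)
  suffices h : ((2 * Jchar (Dv v) (sB1 v) : ℤ) : Zi) = (((2 * 4 ^ n : ℤ)) : Zi) by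
    have h' : (2 * Jchar (Dv v) (sB1 v) : ℤ) = 2 * 4 ^ n := by exact_mod_cast h
    omega
  rw [hm, sumZ4, tset_sB1_zero]
  have hP : ∏ i : Fin n, Sv (tset (sB1 v) i.succ) (2 * v i) = ((4 : ℤ) : Zi) ^ n := by
    have hc : ∏ i : Fin n, Sv (tset (sB1 v) i.succ) (2 * v i)
        = ∏ _i : Fin n, (((4 : ℤ) : Zi)) := by
      refine Finset.prod_congr rfl fun i _ => ?_
      rw [tset_sB1_succ]
      rcases z4cases (v i) with hv | hv | hv | hv <;> rw [hv] <;> decide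
    rw [hc, Finset.prod_const, Finset.card_univ, Fintype.card_fin]
  rw [show c2 Finset.univ 0 = 0 from by decide, show c2 Finset.univ 1 = 0 from by decide,
    show c2 Finset.univ 2 = 2 from by decide, show c2 Finset.univ 3 = 0 from by decide,
    hP]
  push_cast
  ring

theorem absJ_le (s : Finset (Fin (n+1) × Fin 2)) : |Jchar (Dv v) s| ≤ 4 ^ n := by
  have hcard : (Finset.univ : Finset (Fin n → ZMod 4)).card = 4 ^ n := by
    rw [Finset.card_univ, Fintype.card_fun, ZMod.card, Fintype.card_fin]
  calc |Jchar (Dv v) s| ≤ ∑ u : Fin n → ZMod 4, |∏ p ∈ s, Dv v u p| :=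
        Finset.abs_sum_le_sum_abs _ _
    _ ≤ ∑ _u : Fin n → ZMod 4, 1 := by
        refine Finset.sum_le_sum fun u _ => ?_
        have hg : ∀ (x : ZMod 4) (c : Fin 2), gray x c = 1 ∨ gray x c = -1 := by decide
        have hp : (∏ p ∈ s, Dv v u p) = 1 ∨ (∏ p ∈ s, Dv v u p) = -1 := by
          refine Finset.prod_induction _ (fun z => z = 1 ∨ z = -1) ?_ (Or.inl rfl) ?_
          · rintro x y (hx | hx) (hy | hy) <;> rw [hx, hy] <;> norm_num
          · intro p _
            exact hg _ _
        rcases hp with h | h <;> rw [h] <;> norm_num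
    _ = 4 ^ n := by simp [hcard]

/-- flipping the choice at an odd coordinate multiplies `wOf` by `Ei 1` or `Ei 3` -/
theorem wOf_flip (i0 : Fin n) (hodd : v i0 = 1 ∨ v i0 = 3) :
    ∃ u : ZMod 4, (u = 1 ∨ u = 3) ∧
      wOf v (sC v (fun i => if i = i0 then 1 else 0)) =
        Ei u * wOf v (sC v (fun _ => 0)) := by
  set ch0 : Fin n → Fin 2 := fun _ => 0 with hch0
  set ch1 : Fin n → Fin 2 := fun i => if i = i0 then 1 else 0 with hch1
  have hts : ∀ i : Fin n, i ≠ i0 → tset (sC v ch1) i.succ = tset (sC v ch0) i.succ := by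
    intro i hi
    rw [tset_sC_succ, tset_sC_succ, hch1]
    simp only [if_neg hi]
    rfl
  have hfac : ∃ u : ZMod 4, (u = 1 ∨ u = 3) ∧
      Sv (tset (sC v ch1) i0.succ) (v i0) = Ei u * Sv (tset (sC v ch0) i0.succ) (v i0) := by
    rw [tset_sC_succ, tset_sC_succ]
    have hci : ch1 i0 = 1 := by rw [hch1]; simp
    have hc0 : ch0 i0 = 0 := rfl
    rw [hci, hc0]
    rcases hodd with hv | hv
    · refine ⟨3, Or.inr rfl, ?_⟩
      rw [hv]
      decide
    · refine ⟨1, Or.inl rfl, ?_⟩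
      rw [hv]
      decide
  obtain ⟨u, hu, hfe⟩ := hfac
  refine ⟨u, hu, ?_⟩
  rw [wOf, wOf, tset_sC_zero, tset_sC_zero]
  rw [← Finset.mul_prod_erase univ _ (Finset.mem_univ i0),
      ← Finset.mul_prod_erase univ (fun i => Sv (tset (sC v ch0) i.succ) (v i)) (Finset.mem_univ i0)]
  rw [Finset.prod_congr rfl (fun i hi => by
    rw [hts i (Finset.mem_erase.1 hi).1]), hfe]
  ring

theorem J_B2_val {s : Finset (Fin (n+1) × Fin 2)} (h : B2adm v s) :
    ∃ R : ℤ, (R = 0 ∨ R = 1 ∨ R = -1) ∧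
      ((freq v 1 + freq v 3) % 2 = 0 → (R = 1 ∨ R = -1)) ∧
      Jchar (Dv v) s
        = (4 ^ (n - (freq v 1 + freq v 3)) * 2 ^ (freq v 1 + freq v 3)
            * 2 ^ (((freq v 1 + freq v 3) + 1) / 2)) * R := by
  set F := freq v 1 + freq v 3 with hF
  obtain ⟨a, b, hab, hw⟩ := wOf_decomp v h
  obtain ⟨t, ht⟩ := unit_decomp a b
  rw [hab] at ht
  refine ⟨(Ei t * (if (F + 1) % 2 = 1 then (⟨1,1⟩ : Zi) else 1)).re, ?_, ?_, ?_⟩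
  · by_cases hpar : (F + 1) % 2 = 1
    · rw [if_pos hpar]
      rcases re_unit_even t with h' | h'
      · exact Or.inr (Or.inl h')
      · exact Or.inr (Or.inr h')
    · rw [if_neg hpar, mul_one]
      exact re_unit_odd t
  · intro hFe
    have hpar : (F + 1) % 2 = 1 := by omega
    rw [if_pos hpar]
    exact re_unit_even t
  · rw [J_B2_re v h, hw, ht, ← mul_assoc, ← Int.cast_mul, intmul_re]

theorem exists_B2_max (hFn : freq v 1 + freq v 3 ≤ n) :
    ∃ s : Finset (Fin (n+1) × Fin 2), B2adm v s ∧
      |Jchar (Dv v) s|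
        = 4 ^ (n - (freq v 1 + freq v 3)) * 2 ^ (freq v 1 + freq v 3)
            * 2 ^ (((freq v 1 + freq v 3) + 1) / 2) := by
  set F := freq v 1 + freq v 3 with hF
  set K : ℤ := 4 ^ (n - F) * 2 ^ F * 2 ^ ((F + 1) / 2) with hK
  have hK0 : (0 : ℤ) < K := by positivity
  by_cases hpar : F % 2 = 0
  · obtain ⟨R, hR, hRe, hJ⟩ := J_B2_val v (B2adm_sC v (fun _ => 0))
    refine ⟨_, B2adm_sC v (fun _ => 0), ?_⟩
    rw [hJ]
    rcases hRe hpar with h' | h' <;> rw [h']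
    · rw [mul_one, abs_of_pos hK0]
    · rw [mul_neg_one, abs_neg, abs_of_pos hK0]
  · -- F odd : use the flip pair
    have hex : ∃ i0 : Fin n, v i0 = 1 ∨ v i0 = 3 := by
      by_contra hno
      push_neg at hno
      have hF1 : freq v 1 = 0 := by
        rw [freq, Finset.card_eq_zero, Finset.filter_eq_empty_iff]
        intro i _
        exact (hno i).1
      have hF3 : freq v 3 = 0 := by
        rw [freq, Finset.card_eq_zero, Finset.filter_eq_empty_iff]
        intro i _
        exact (hno i).2
      omega
    obtain ⟨i0, hodd⟩ := hex
    have h0 := B2adm_sC v (fun _ => (0 : Fin 2))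
    have h1 := B2adm_sC v (fun i => if i = i0 then (1 : Fin 2) else 0)
    obtain ⟨a, b, hab, hw⟩ := wOf_decomp v h0
    obtain ⟨t, ht⟩ := unit_decomp a b
    rw [hab] at ht
    have hpar1 : ¬ ((F + 1) % 2 = 1) := by omega
    rw [if_neg hpar1, mul_one] at ht
    have hw0 : wOf v (sC v (fun _ => 0)) = ((K : ℤ) : Zi) * Ei t := by
      rw [hw, ht, ← mul_assoc, ← Int.cast_mul]
    obtain ⟨u, hu, hflip⟩ := wOf_flip v i0 hodd
    have hw1 : wOf v (sC v (fun i => if i = i0 then (1 : Fin 2) else 0))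
        = ((K : ℤ) : Zi) * Ei (u + t) := by
      rw [hflip, hw0, Ei_add]
      ring
    have hJ0 : Jchar (Dv v) (sC v (fun _ => 0)) = K * (Ei t).re := by
      rw [J_B2_re v h0, hw0, intmul_re]
    have hJ1 : Jchar (Dv v) (sC v (fun i => if i = i0 then (1 : Fin 2) else 0))
        = K * (Ei (u + t)).re := by
      rw [J_B2_re v h1, hw1, intmul_re]
    have hp := re_pair t u hu
    rcases re_unit_odd t with h' | h' | h'
    · rcases re_unit_odd (u + t) with hh | hh | hh
      · rw [h', hh] at hp
        norm_num at hp
      · exact ⟨_, h1, by rw [hJ1, hh, mul_one, abs_of_pos hK0]⟩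
      · exact ⟨_, h1, by rw [hJ1, hh, mul_neg_one, abs_neg, abs_of_pos hK0]⟩
    · exact ⟨_, h0, by rw [hJ0, h', mul_one, abs_of_pos hK0]⟩
    · exact ⟨_, h0, by rw [hJ0, h', mul_neg_one, abs_neg, abs_of_pos hK0]⟩

theorem rho_eq (s : Finset (Fin (n+1) × Fin 2)) :
    rho (Dv v) s = |(Jchar (Dv v) s : ℚ)| / 4 ^ n := by
  rw [rho]
  congr 1
  rw [Fintype.card_fun, ZMod.card, Fintype.card_fin]
  push_cast
  ring

theorem rho_zero {s : Finset (Fin (n+1) × Fin 2)} (h : Jchar (Dv v) s = 0) :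
    rho (Dv v) s = 0 := by
  rw [rho_eq, h]
  simp

theorem rho_le_one (s : Finset (Fin (n+1) × Fin 2)) : rho (Dv v) s ≤ 1 := by
  rw [rho_eq]
  rw [div_le_one (by positivity)]
  have := absJ_le v s
  calc |(Jchar (Dv v) s : ℚ)| = ((|Jchar (Dv v) s| : ℤ) : ℚ) := by rw [Int.cast_abs]
    _ ≤ ((4 ^ n : ℤ) : ℚ) := by exact_mod_cast this
    _ = 4 ^ n := by push_cast; ring

theorem rho_sB1 : rho (Dv v) (sB1 v) = 1 := by
  rw [rho_eq, J_sB1]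
  rw [abs_of_nonneg (by positivity)]
  rw [div_eq_one_iff_eq (by positivity)]
  push_cast
  ring

theorem Kdiv (hFn : freq v 1 + freq v 3 ≤ n) :
    ((4 ^ (n - (freq v 1 + freq v 3)) * 2 ^ (freq v 1 + freq v 3)
        * 2 ^ (((freq v 1 + freq v 3) + 1) / 2) : ℤ) : ℚ) / 4 ^ n
      = 1 / 2 ^ ((freq v 1 + freq v 3) / 2) := by
  set F := freq v 1 + freq v 3 with hF
  rw [div_eq_div_iff (by positivity) (by positivity)]
  push_cast
  rw [mul_comm, ← mul_assoc]
  rw [show (4:ℚ) = 2^2 from by norm_num, ← pow_mul, ← pow_mul, ← pow_add, ← pow_add, ← pow_add]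
  rw [one_mul]
  congr 1
  omega

theorem rho_B2_le {s : Finset (Fin (n+1) × Fin 2)} (h : B2adm v s)
    (hFn : freq v 1 + freq v 3 ≤ n) :
    rho (Dv v) s ≤ 1 / 2 ^ ((freq v 1 + freq v 3) / 2) := by
  obtain ⟨R, hR, _, hJ⟩ := J_B2_val v h
  rw [rho_eq, ← Kdiv v hFn]
  rw [div_le_div_iff_of_pos_right (by positivity)]
  rw [hJ]
  push_cast
  rw [abs_mul]
  have h1 : |(R : ℚ)| ≤ 1 := by
    rcases hR with h' | h' | h' <;> rw [h'] <;> norm_num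
  have h2 : (0:ℚ) ≤ |(4:ℚ) ^ (n - (freq v 1 + freq v 3)) * 2 ^ (freq v 1 + freq v 3)
      * 2 ^ (((freq v 1 + freq v 3) + 1) / 2)| := abs_nonneg _
  calc |(4:ℚ) ^ (n - (freq v 1 + freq v 3)) * 2 ^ (freq v 1 + freq v 3)
      * 2 ^ (((freq v 1 + freq v 3) + 1) / 2)| * |(R:ℚ)|
      ≤ |(4:ℚ) ^ (n - (freq v 1 + freq v 3)) * 2 ^ (freq v 1 + freq v 3)
        * 2 ^ (((freq v 1 + freq v 3) + 1) / 2)| * 1 := by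
        exact mul_le_mul_of_nonneg_left h1 h2
    _ = (4:ℚ) ^ (n - (freq v 1 + freq v 3)) * 2 ^ (freq v 1 + freq v 3)
        * 2 ^ (((freq v 1 + freq v 3) + 1) / 2) := by
        rw [mul_one, abs_of_nonneg (by positivity)]

theorem rho_B2_max (hFn : freq v 1 + freq v 3 ≤ n) :
    ∃ s : Finset (Fin (n+1) × Fin 2), B2adm v s ∧
      rho (Dv v) s = 1 / 2 ^ ((freq v 1 + freq v 3) / 2) := by
  obtain ⟨s, hadm, hJ⟩ := exists_B2_max v hFn
  refine ⟨s, hadm, ?_⟩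
  rw [rho_eq, ← Kdiv v hFn]
  congr 1
  rw [← Int.cast_abs, hJ]

theorem hF_le : freq v 1 + freq v 3 ≤ n := by
  have h := freq_sum v
  rw [sumZ4] at h
  omega

end Main


/-- Corollary 2: the generalized resolution of `D` equals `k₂` if `k₁ ≥ k₂`
and `k₁ + 1 − ρ` otherwise. -/
theorem statement6 (n : ℕ) (v : Fin n → ZMod 4)
    (f1 f2 f3 : ℕ) (h1 : f1 = freq v 1) (h2 : f2 = freq v 2) (h3 : f3 = freq v 3)
    (k1 k2 : ℕ) (hk1 : k1 = f1 + 2 * f2 + f3 + 1) (hk2 : k2 = 2 * f1 + 2 * f3 + 2)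
    (p : ℚ) (hp : p = 1 / 2 ^ ((f1 + f3) / 2)) :
    hasResolution (Dv v) (if k2 ≤ k1 then (k2 : ℚ) else (k1 : ℚ) + 1 - p) := by
  subst h1 h2 h3 hk1 hk2 hp
  have hFn := hF_le v
  by_cases hle : 2 * freq v 1 + 2 * freq v 3 + 2 ≤ freq v 1 + 2 * freq v 2 + freq v 3 + 1
  · rw [if_pos hle]
    refine ⟨2 * freq v 1 + 2 * freq v 3 + 2, 1,
      ⟨sB1 v, sB1_card v, ?_⟩, ?_, ⟨sB1 v, sB1_card v, rho_sB1 v⟩,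
      fun s _ => rho_le_one v s, by push_cast; ring⟩
    · rw [rho_sB1 v]
      norm_num
    · intro s hne hcard
      refine rho_zero v (key_vanish v hne ?_ ?_)
      · intro he
        rw [he, sB1_card v] at hcard
        omega
      · intro hB2
        have := B2adm_card v hB2
        omega
  · rw [if_neg hle]
    obtain ⟨s0, hs0adm, hs0rho⟩ := rho_B2_max v hFn
    have hs0card := B2adm_card v hs0adm
    refine ⟨freq v 1 + 2 * freq v 2 + freq v 3 + 1, 1 / 2 ^ ((freq v 1 + freq v 3) / 2),
      ⟨s0, hs0card, ?_⟩, ?_, ⟨s0, hs0card, hs0rho⟩, ?_, by push_cast; ring⟩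
    · rw [hs0rho]
      positivity
    · intro s hne hcard
      refine rho_zero v (key_vanish v hne ?_ ?_)
      · intro he
        rw [he, sB1_card v] at hcard
        omega
      · intro hB2
        have := B2adm_card v hB2
        omega
    · intro s hcard
      by_cases hJ : Jchar (Dv v) s = 0
      · rw [rho_zero v hJ]
        positivity
      · have hne : s.Nonempty := by
          rw [← Finset.card_pos, hcard]
          omega
        have halt : s = sB1 v ∨ B2adm v s := by
          by_contra hcon
          push_neg at hcon
          exact hJ (key_vanish v hne hcon.1 hcon.2)
        rcases halt with he | hB2
        · rw [he, sB1_card v] at hcard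
          omega
        · exact rho_B2_le v hB2 hFn
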